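/- The transformation tr from tree representations to molecular trees is injective on any set of tree representations with the same number of vertices (and the same fixed numbering convention for cycle edges): if G1 and G2 are tree representations with the same number of vertices and tr(G1) = tr(G2), then G1 = G2. -/

import Mathlib

/-! ### Molecular graphs and molecular trees -/

/-- A molecular graph `G = (V, E, ℓ, b)`: vertices are `Fin k` (representing
`{1, …, k}`, `k ≥ 1`); the undirected edges are the unordered pairs `e` with
`bond e > 0` (no self-loops), labelled by `bond`; `ℓ` is given by `label`. -/
structure MolGraph (El : Type) where
  k : ℕ
  k_pos : 0 < k
  bond : Sym2 (Fin k) → ℕ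
  bond_irrefl : ∀ v : Fin k, bond s(v, v) = 0
  label : Fin k → El

namespace MolGraph

variable {El : Type}

/-- The underlying simple graph of a molecular graph. -/
def toSimple (G : MolGraph El) : SimpleGraph (Fin G.k) where
  Adj u v := u ≠ v ∧ 0 < G.bond s(u, v)
  symm := by
    constructor
    intro u v h
    exact ⟨h.1.symm, by rw [Sym2.eq_swap]; exact h.2⟩
  loopless := ⟨fun v h => h.1 rfl⟩

/-- The root: vertex `1` of the molecular graph. -/
def root (G : MolGraph El) : Fin G.k := ⟨0, G.k_pos⟩

/-- `Descend G v u` states that `u` belongs to the subtree rooted at `v`: every walk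
from the root to `u` passes through `v`. -/
def Descend (G : MolGraph El) (v u : Fin G.k) : Prop :=
  ∀ p : G.toSimple.Walk G.root u, v ∈ p.support

/-- `G` is a molecular tree: it is connected and free of cycles, and the natural order
of the vertices corresponds to a depth-first search of the tree rooted at vertex `1`
(characterized by preorder numbering: every vertex is the minimum of its subtree and
each subtree is an interval of vertices). -/
def IsMolTree (G : MolGraph El) : Prop :=
  G.toSimple.IsTree ∧
  (∀ v u : Fin G.k, G.Descend v u → v ≤ u) ∧
  (∀ v u w : Fin G.k, G.Descend v u → v ≤ w → w ≤ u → G.Descend v w)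

end MolGraph

/-! ### Tree representations -/

/-- A tree representation `G = (V, T ∪ C, ℓ, b)` of a molecular graph: a molecular
tree `(V, T, ℓ, b)` (the tree edges `T` with their bond labels) together with the
cycle edges `C`.  The cycle edges are stored as the list `cycles` of triples
`(v, w, b)` with `v < w` and bond label `b > 0`, numbered `c_1, …, c_m` in the fixed
canonical way: sorted lexicographically by endpoints (which also makes them pairwise
distinct).  Cycle edges are disjoint from the tree edges. -/
structure TreeRep (El : Type) where
  tree : MolGraph El
  tree_isMolTree : tree.IsMolTree
  cycles : List (Fin tree.k × Fin tree.k × ℕ)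
  cyc_lt : ∀ c ∈ cycles, c.1 < c.2.1
  cyc_pos : ∀ c ∈ cycles, 0 < c.2.2
  cyc_sorted : cycles.Chain' (fun c d => c.1 < d.1 ∨ (c.1 = d.1 ∧ c.2.1 < d.2.1))
  cyc_disj : ∀ c ∈ cycles, tree.bond s(c.1, c.2.1) = 0

namespace TreeRep

variable {El : Type}

/-- The cycle edge `c_i` corresponding to the fresh vertex with (0-based) offset `j`;
the two fresh vertices with offsets `2i` and `2i+1` belong to the cycle edge `c_i`
(0-based). -/
def cyc (G : TreeRep El) (j : ℕ) : Fin G.tree.k × Fin G.tree.k × ℕ :=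
  G.cycles.getD (j / 2) (G.tree.root, G.tree.root, 0)

/-- The endpoint of the corresponding cycle edge to which the fresh vertex with offset
`j` is attached: `min c_i` for the first fresh vertex of `c_i`, `max c_i` for the
second. -/
def anchor (G : TreeRep El) (j : ℕ) : Fin G.tree.k :=
  if j % 2 = 0 then (G.cyc j).1 else (G.cyc j).2.1

/-- The label of the fresh vertex with offset `j`: the label of the opposite endpoint
of its cycle edge. -/
def freshLabel (G : TreeRep El) (j : ℕ) : El :=
  if j % 2 = 0 then G.tree.label (G.cyc j).2.1 else G.tree.label (G.cyc j).1

/-- The bond label of the new tree edge attaching the fresh vertex with offset `j`: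
the bond label of its cycle edge. -/
def freshBond (G : TreeRep El) (j : ℕ) : ℕ := (G.cyc j).2.2

/-- Auxiliary (asymmetric) bond function of `tr G`: tree edges keep their bonds, and
each fresh vertex is attached to its anchor with the bond of its cycle edge. -/
def g (G : TreeRep El) (u v : Fin (G.tree.k + 2 * G.cycles.length)) : ℕ :=
  if hu : u.val < G.tree.k then
    if hv : v.val < G.tree.k then G.tree.bond s(⟨u.val, hu⟩, ⟨v.val, hv⟩)
    else if G.anchor (v.val - G.tree.k) = ⟨u.val, hu⟩ then
      G.freshBond (v.val - G.tree.k)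
    else 0
  else 0

/-- The transformation `tr`: the molecular tree obtained from a tree representation by
replacing each cycle edge `c_i = {v, w}` by two new edges `{min c_i, k+2i−1}` and
`{max c_i, k+2i}` to fresh vertices; each new edge inherits the bond label of the
cycle edge, and each fresh vertex receives the label of the opposite endpoint. -/
def tr (G : TreeRep El) : MolGraph El where
  k := G.tree.k + 2 * G.cycles.length
  k_pos := Nat.lt_of_lt_of_le G.tree.k_pos (Nat.le_add_right _ _)
  bond := Sym2.lift ⟨fun u v => max (G.g u v) (G.g v u), fun u v => max_comm _ _⟩
  bond_irrefl := by
    intro v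
    rw [Sym2.lift_mk]
    simp only [max_self]
    by_cases h : v.val < G.tree.k
    · simp only [g, dif_pos h]
      exact G.tree.bond_irrefl _
    · simp only [g, dif_neg h]
  label := fun v =>
    if h : v.val < G.tree.k then G.tree.label ⟨v.val, h⟩
    else G.freshLabel (v.val - G.tree.k)

end TreeRep

namespace TreeRep

variable {El : Type}

lemma heq_sym2 {n n' : ℕ} (h : n = n')
    {f : Sym2 (Fin n) → ℕ} {g : Sym2 (Fin n') → ℕ} (hfg : HEq f g)
    {a b : ℕ} (ha : a < n) (hb : b < n) :
    f s(⟨a, ha⟩, ⟨b, hb⟩) = g s(⟨a, h ▸ ha⟩, ⟨b, h ▸ hb⟩) := by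
  subst h; rw [heq_iff_eq] at hfg; subst hfg; rfl

lemma heq_fin {El : Type} {n n' : ℕ} (h : n = n')
    {f : Fin n → El} {g : Fin n' → El} (hfg : HEq f g)
    {a : ℕ} (ha : a < n) :
    f ⟨a, ha⟩ = g ⟨a, h ▸ ha⟩ := by
  subst h; rw [heq_iff_eq] at hfg; subst hfg; rfl

lemma tr_bond_tree (G : TreeRep El) {a b : ℕ} (ha : a < G.tree.k) (hb : b < G.tree.k)
    (ha' : a < G.tr.k) (hb' : b < G.tr.k) :
    G.tr.bond s(⟨a, ha'⟩, ⟨b, hb'⟩) = G.tree.bond s(⟨a, ha⟩, ⟨b, hb⟩) := by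
  show max (G.g ⟨a, ha'⟩ ⟨b, hb'⟩) (G.g ⟨b, hb'⟩ ⟨a, ha'⟩) = _
  simp only [g, dif_pos ha, dif_pos hb]
  rw [Sym2.eq_swap (a := (⟨b, hb⟩ : Fin G.tree.k))]
  exact max_self _

lemma tr_bond_fresh (G : TreeRep El) {a b : ℕ} (ha : a < G.tree.k)
    (hbk : G.tree.k ≤ b) (ha' : a < G.tr.k) (hb' : b < G.tr.k) :
    G.tr.bond s(⟨a, ha'⟩, ⟨b, hb'⟩) =
      if G.anchor (b - G.tree.k) = ⟨a, ha⟩ then G.freshBond (b - G.tree.k) else 0 := by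
  show max (G.g ⟨a, ha'⟩ ⟨b, hb'⟩) (G.g ⟨b, hb'⟩ ⟨a, ha'⟩) = _
  have hnb : ¬ (b < G.tree.k) := by omega
  simp only [g, dif_pos ha, dif_neg hnb]
  exact max_eq_left (Nat.zero_le _)

lemma tr_label_tree (G : TreeRep El) {a : ℕ} (ha : a < G.tree.k) (ha' : a < G.tr.k) :
    G.tr.label ⟨a, ha'⟩ = G.tree.label ⟨a, ha⟩ := by
  show (if h : a < G.tree.k then _ else _) = _
  rw [dif_pos ha]

lemma anchor_even (G : TreeRep El) {i : ℕ} (hi : i < G.cycles.length) :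
    G.anchor (2 * i) = G.cycles[i].1 := by
  simp [anchor, cyc, Nat.mul_div_cancel_left _ (by norm_num : (0:ℕ) < 2),
    List.getD_eq_getElem _ _ hi, List.getElem?_eq_getElem hi]

lemma anchor_odd (G : TreeRep El) {i : ℕ} (hi : i < G.cycles.length) :
    G.anchor (2 * i + 1) = G.cycles[i].2.1 := by
  have h2 : (2 * i + 1) / 2 = i := by omega
  have h1 : (2 * i + 1) % 2 = 1 := by omega
  simp [anchor, cyc, h1, h2, List.getD_eq_getElem _ _ hi, List.getElem?_eq_getElem hi]

lemma freshBond_even (G : TreeRep El) {i : ℕ} (hi : i < G.cycles.length) :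
    G.freshBond (2 * i) = G.cycles[i].2.2 := by
  simp [freshBond, cyc, Nat.mul_div_cancel_left _ (by norm_num : (0:ℕ) < 2),
    List.getD_eq_getElem _ _ hi, List.getElem?_eq_getElem hi]

lemma freshBond_odd (G : TreeRep El) {i : ℕ} (hi : i < G.cycles.length) :
    G.freshBond (2 * i + 1) = G.cycles[i].2.2 := by
  have h2 : (2 * i + 1) / 2 = i := by omega
  simp [freshBond, cyc, h2, List.getD_eq_getElem _ _ hi, List.getElem?_eq_getElem hi]

end TreeRep

/-- The transformation `tr` is injective on any set of tree representations with the
same number of vertices (and the same fixed numbering convention for cycle edges):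
if `G₁` and `G₂` are tree representations with the same number of vertices and
`tr(G₁) = tr(G₂)`, then `G₁ = G₂`. -/
theorem tr_injective {El : Type} (G₁ G₂ : TreeRep El)
    (hk : G₁.tree.k = G₂.tree.k) (h : G₁.tr = G₂.tr) : G₁ = G₂ := by
  have hK : G₁.tr.k = G₂.tr.k := congrArg MolGraph.k h
  have hlen : G₁.cycles.length = G₂.cycles.length := by
    have hK' : G₁.tree.k + 2 * G₁.cycles.length = G₂.tree.k + 2 * G₂.cycles.length := hK
    omega
  have hb : HEq G₁.tr.bond G₂.tr.bond := by rw [h]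
  have hl : HEq G₁.tr.label G₂.tr.label := by rw [h]
  have Pb : ∀ (a b : ℕ) (ha₁ : a < G₁.tree.k) (hb₁ : b < G₁.tree.k)
      (ha₂ : a < G₂.tree.k) (hb₂ : b < G₂.tree.k),
      G₁.tree.bond s(⟨a, ha₁⟩, ⟨b, hb₁⟩) = G₂.tree.bond s(⟨a, ha₂⟩, ⟨b, hb₂⟩) := by
    intro a b ha₁ hb₁ ha₂ hb₂
    have ha' : a < G₁.tr.k := lt_of_lt_of_le ha₁ (Nat.le_add_right _ _)
    have hb'' : b < G₁.tr.k := lt_of_lt_of_le hb₁ (Nat.le_add_right _ _)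
    have e := TreeRep.heq_sym2 hK hb ha' hb''
    rw [TreeRep.tr_bond_tree G₁ ha₁ hb₁, TreeRep.tr_bond_tree G₂ ha₂ hb₂] at e
    exact e
  have Pl : ∀ (a : ℕ) (ha₁ : a < G₁.tree.k) (ha₂ : a < G₂.tree.k),
      G₁.tree.label ⟨a, ha₁⟩ = G₂.tree.label ⟨a, ha₂⟩ := by
    intro a ha₁ ha₂
    have ha' : a < G₁.tr.k := lt_of_lt_of_le ha₁ (Nat.le_add_right _ _)
    have e := TreeRep.heq_fin hK hl ha'
    rw [TreeRep.tr_label_tree G₁ ha₁, TreeRep.tr_label_tree G₂ ha₂] at e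
    exact e
  have key : ∀ (a : ℕ) (ha₁ : a < G₁.tree.k) (ha₂ : a < G₂.tree.k)
      (j : ℕ) (hj : j < 2 * G₁.cycles.length),
      (if G₁.anchor j = ⟨a, ha₁⟩ then G₁.freshBond j else 0) =
      (if G₂.anchor j = ⟨a, ha₂⟩ then G₂.freshBond j else 0) := by
    intro a ha₁ ha₂ j hj
    have ha' : a < G₁.tr.k := lt_of_lt_of_le ha₁ (Nat.le_add_right _ _)
    have hb'' : G₁.tree.k + j < G₁.tr.k := by
      show G₁.tree.k + j < G₁.tree.k + 2 * G₁.cycles.length; omega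
    have e := TreeRep.heq_sym2 hK hb ha' hb''
    rw [TreeRep.tr_bond_fresh G₁ ha₁ (Nat.le_add_right _ _),
      TreeRep.tr_bond_fresh G₂ ha₂ (by omega : G₂.tree.k ≤ G₁.tree.k + j)] at e
    have e₁ : G₁.tree.k + j - G₁.tree.k = j := by omega
    have e₂ : G₁.tree.k + j - G₂.tree.k = j := by omega
    rw [e₁, e₂] at e
    exact e
  have Pc : ∀ (i : ℕ) (hi₁ : i < G₁.cycles.length) (hi₂ : i < G₂.cycles.length),
      (G₁.cycles[i].1.val = G₂.cycles[i].1.val ∧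
       G₁.cycles[i].2.1.val = G₂.cycles[i].2.1.val) ∧
      G₁.cycles[i].2.2 = G₂.cycles[i].2.2 := by
    intro i hi₁ hi₂
    have hcpos : 0 < G₁.cycles[i].2.2 := G₁.cyc_pos _ (List.getElem_mem _)
    have k1 := key G₁.cycles[i].1.val G₁.cycles[i].1.isLt
      (lt_of_lt_of_eq G₁.cycles[i].1.isLt hk) (2 * i) (by omega)
    rw [TreeRep.anchor_even G₁ hi₁, TreeRep.anchor_even G₂ hi₂,
      TreeRep.freshBond_even G₁ hi₁, TreeRep.freshBond_even G₂ hi₂, Fin.eta,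
      if_pos rfl] at k1
    have k2 := key G₁.cycles[i].2.1.val G₁.cycles[i].2.1.isLt
      (lt_of_lt_of_eq G₁.cycles[i].2.1.isLt hk) (2 * i + 1) (by omega)
    rw [TreeRep.anchor_odd G₁ hi₁, TreeRep.anchor_odd G₂ hi₂,
      TreeRep.freshBond_odd G₁ hi₁, TreeRep.freshBond_odd G₂ hi₂, Fin.eta,
      if_pos rfl] at k2
    constructor
    · constructor
      · split at k1
        · rename_i heq; rw [heq]
        · omega
      · split at k2
        · rename_i heq; rw [heq]
        · omega
    · split at k1
      · exact k1
      · omega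
  obtain ⟨⟨k₁, kpos₁, b₁, bi₁, l₁⟩, ht₁, cy₁, lt₁, pos₁, srt₁, dj₁⟩ := G₁
  obtain ⟨⟨k₂, kpos₂, b₂, bi₂, l₂⟩, ht₂, cy₂, lt₂, pos₂, srt₂, dj₂⟩ := G₂
  simp only at hk hlen Pb Pl Pc ⊢
  subst hk
  have hbond : b₁ = b₂ := by
    funext e
    induction e using Sym2.ind with
    | _ u v =>
      have := Pb u.val v.val u.isLt v.isLt u.isLt v.isLt
      simpa using this
  have hlabel : l₁ = l₂ := by
    funext v
    have := Pl v.val v.isLt v.isLt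
    simpa using this
  have hcy : cy₁ = cy₂ := by
    apply List.ext_getElem hlen
    intro i hi₁ hi₂
    obtain ⟨⟨e1, e2⟩, e3⟩ := Pc i hi₁ hi₂
    have p1 : cy₁[i].1 = cy₂[i].1 := Fin.val_injective e1
    have p2 : cy₁[i].2.1 = cy₂[i].2.1 := Fin.val_injective e2
    ext
    · exact e1
    · exact e2
    · exact e3
  subst hbond hlabel hcy
  rfl
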